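/- arXiv:1907.02145 — 3 statements merged into one kernel-verified Lean document; each statement's English description precedes it below -/
import Mathlib

section
/- Let A₁, A₂, B be symmetric n×n real matrices with A₁ and A₂ positive semidefinite. Then tr[A₁ B A₂ B] ≤ tr[A₁|B|] · tr[A₂|B|], where |B| denotes the matrix obtained from B by replacing each eigenvalue with its absolute value. -/
open Matrix

/-- `|B|`: the matrix obtained by replacing each eigenvalue of the symmetric matrix `B`
by its absolute value, realized as the PSD square root of `Bᴴ * B`. -/
noncomputable def matAbs {n : ℕ} (B : Matrix (Fin n) (Fin n) ℝ) : Matrix (Fin n) (Fin n) ℝ :=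
  (Matrix.posSemidef_conjTranspose_mul_self B).1.eigenvectorUnitary.1 *
    diagonal ((↑) ∘ (√·) ∘ (Matrix.posSemidef_conjTranspose_mul_self B).1.eigenvalues) *
    (star (Matrix.posSemidef_conjTranspose_mul_self B).1.eigenvectorUnitary : Matrix (Fin n) (Fin n) ℝ)

/-- operator norm (largest singular value) of a matrix. -/
noncomputable def opNorm {n : ℕ} (M : Matrix (Fin n) (Fin n) ℝ) : ℝ :=
  ‖Matrix.toEuclideanCLM (𝕜 := ℝ) M‖

set_option maxHeartbeats 1600000

open scoped MatrixOrder in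
lemma matAbs_eq_of_sq {n : ℕ} (B X : Matrix (Fin n) (Fin n) ℝ) (hX : X.PosSemidef)
    (h : X ^ 2 = Bᴴ * B) : matAbs B = X := by
  have hsq : matAbs B = CFC.sqrt (Bᴴ * B) := by
    rw [CFC.sqrt_eq_cfc, cfc_nnreal_eq_real _ (Bᴴ * B)
      (nonneg_iff_posSemidef.mpr (Matrix.posSemidef_conjTranspose_mul_self B)),
      (Matrix.posSemidef_conjTranspose_mul_self B).1.cfc_eq]
    simp [matAbs, IsHermitian.cfc]
    refine congrArg (fun d => _ * diagonal d * _) (funext fun i => ?_)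
    simp only [Function.comp_apply]
    rw [max_eq_left ((Matrix.posSemidef_conjTranspose_mul_self B).eigenvalues_nonneg i)]
  rw [hsq]
  exact CFC.sqrt_unique (by rw [← pow_two]; exact h) (nonneg_iff_posSemidef.mpr hX)

/-- The trace of a real PSD matrix is nonnegative. -/
lemma psd_trace_nonneg {m : Type*} [Fintype m] [DecidableEq m] {M : Matrix m m ℝ}
    (hM : M.PosSemidef) : 0 ≤ M.trace := by
  rw [Matrix.trace]
  apply Finset.sum_nonneg
  intro i _
  have := hM.dotProduct_mulVec_nonneg (Pi.single i 1)
  simpa [dotProduct, Matrix.mulVec, Pi.single_apply] using this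

open scoped MatrixOrder in
/-- The trace of the product of two real PSD matrices is nonnegative. -/
lemma psd_trace_mul_nonneg {m : Type*} [Fintype m] [DecidableEq m] {C D : Matrix m m ℝ}
    (hC : C.PosSemidef) (hD : D.PosSemidef) : 0 ≤ (C * D).trace := by
  have h1 : C * D = CFC.sqrt C * (CFC.sqrt C * D) := by
    rw [← mul_assoc, CFC.sqrt_mul_sqrt_self C (nonneg_iff_posSemidef.mpr hC)]
  rw [h1, trace_mul_comm]
  have h2 : (CFC.sqrt C * D * CFC.sqrt C).PosSemidef := by
    have := hD.mul_mul_conjTranspose_same (CFC.sqrt C)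
    rwa [(CFC.sqrt_nonneg C).posSemidef.isHermitian.eq] at this
  exact psd_trace_nonneg h2

/-- For a real PSD matrix `C`, the matrix `(tr C) • 1 - C` is PSD. -/
lemma psd_loewner_trace {m : Type*} [Fintype m] [DecidableEq m] {C : Matrix m m ℝ}
    (hC : C.PosSemidef) : (C.trace • (1 : Matrix m m ℝ) - C).PosSemidef := by
  have hH := hC.1
  set U : Matrix m m ℝ := (hH.eigenvectorUnitary : Matrix m m ℝ) with hUdef
  have hu1 : U * star U = 1 := mem_unitaryGroup_iff.mp hH.eigenvectorUnitary.2
  have hu2 : star U * U = 1 := mem_unitaryGroup_iff'.mp hH.eigenvectorUnitary.2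
  have hspec : C = U * diagonal hH.eigenvalues * star U := by
    have := hH.spectral_theorem
    rwa [RCLike.ofReal_real_eq_id, Function.id_comp] at this
  have htr : C.trace = ∑ i, hH.eigenvalues i := by
    conv_lhs => rw [hspec]
    rw [trace_mul_comm, ← mul_assoc, hu2, one_mul, trace_diagonal]
  have key : C.trace • (1 : Matrix m m ℝ) - C
      = U * diagonal (fun i => C.trace - hH.eigenvalues i) * star U := by
    have h3 : diagonal (fun i => C.trace - hH.eigenvalues i)
        = C.trace • (1 : Matrix m m ℝ) - diagonal hH.eigenvalues := by
      rw [smul_one_eq_diagonal, diagonal_sub]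
    rw [h3, mul_sub, sub_mul, ← hspec]
    congr 1
    rw [mul_smul_comm, smul_mul_assoc, mul_one, hu1]
  rw [key]
  have hdiag : (diagonal (fun i => C.trace - hH.eigenvalues i)).PosSemidef := by
    apply PosSemidef.diagonal
    intro i
    simp only [Pi.zero_apply, sub_nonneg, htr]
    exact Finset.single_le_sum (fun j _ => hC.eigenvalues_nonneg j) (Finset.mem_univ i)
  have := hdiag.mul_mul_conjTranspose_same U
  rwa [← star_eq_conjTranspose] at this

/-- For real PSD matrices `C, D` we have `tr (C * D) ≤ tr C * tr D`. -/
lemma psd_trace_mul_le {m : Type*} [Fintype m] [DecidableEq m] {C D : Matrix m m ℝ}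
    (hC : C.PosSemidef) (hD : D.PosSemidef) : (C * D).trace ≤ C.trace * D.trace := by
  have h1 : 0 ≤ ((C.trace • (1 : Matrix m m ℝ) - C) * D).trace :=
    psd_trace_mul_nonneg (psd_loewner_trace hC) hD
  rw [sub_mul, trace_sub, smul_mul_assoc, one_mul, trace_smul, smul_eq_mul] at h1
  linarith

/-- sign function with `sgnR 0 = 1`. -/
noncomputable def sgnR (t : ℝ) : ℝ := if t < 0 then -1 else 1

lemma sgnR_mul_self (t : ℝ) : sgnR t * sgnR t = 1 := by
  unfold sgnR; by_cases h : t < 0 <;> simp [h]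

lemma sgnR_mul_abs (t : ℝ) : sgnR t * |t| = t := by
  unfold sgnR
  by_cases h : t < 0
  · simp [h, abs_of_neg h]
  · simp [h, abs_of_nonneg (not_lt.mp h)]

theorem trace_product_bound {n : ℕ} (A₁ A₂ B : Matrix (Fin n) (Fin n) ℝ)
    (hA₁ : A₁.PosSemidef) (hA₂ : A₂.PosSemidef) (hB : B.IsSymm) :
    (A₁ * B * A₂ * B).trace ≤ (A₁ * matAbs B).trace * (A₂ * matAbs B).trace := by
  have hB' : B.IsHermitian := by
    rw [Matrix.IsHermitian, conjTranspose_eq_transpose_of_trivial]; exact hB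
  set U : Matrix (Fin n) (Fin n) ℝ := (hB'.eigenvectorUnitary : Matrix (Fin n) (Fin n) ℝ)
    with hUdef
  set lam := hB'.eigenvalues with hlam
  have hu1 : U * star U = 1 := mem_unitaryGroup_iff.mp hB'.eigenvectorUnitary.2
  have hu2 : star U * U = 1 := mem_unitaryGroup_iff'.mp hB'.eigenvectorUnitary.2
  set Cg : (ℝ → ℝ) → Matrix (Fin n) (Fin n) ℝ :=
    fun g => U * diagonal (g ∘ lam) * star U with hCgdef
  have hmul : ∀ g h : ℝ → ℝ, Cg g * Cg h = Cg (fun t => g t * h t) := by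
    intro g h
    simp only [hCgdef, mul_assoc]
    rw [← mul_assoc (star U) U, hu2, one_mul, ← mul_assoc (diagonal (g ∘ lam)),
      diagonal_mul_diagonal]
    rfl
  have hpsd : ∀ g : ℝ → ℝ, (∀ t, 0 ≤ g t) → (Cg g).PosSemidef := by
    intro g hg
    have hd : (diagonal (g ∘ lam)).PosSemidef := PosSemidef.diagonal (fun i => hg _)
    have := hd.mul_mul_conjTranspose_same U
    rwa [← star_eq_conjTranspose] at this
  have hid : Cg (fun t => t) = B := by
    have h := hB'.spectral_theorem
    rw [RCLike.ofReal_real_eq_id, Function.id_comp] at h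
    simp only [hCgdef]
    exact h.symm
  have hsymm : ∀ g : ℝ → ℝ, (Cg g)ᴴ = Cg g := by
    intro g
    simp only [hCgdef]
    rw [conjTranspose_mul, conjTranspose_mul, diagonal_conjTranspose,
      ← star_eq_conjTranspose U, ← star_eq_conjTranspose (star U), star_star,
      show star (g ∘ lam) = g ∘ lam from funext fun i => star_trivial _, mul_assoc]
  have hRSR : Cg (fun t => Real.sqrt |t|) * Cg sgnR * Cg (fun t => Real.sqrt |t|) = B := by
    rw [hmul, hmul, ← hid]
    refine congrArg Cg (funext fun t => ?_)
    show Real.sqrt |t| * sgnR t * Real.sqrt |t| = t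
    rw [mul_comm (Real.sqrt |t|) (sgnR t), mul_assoc, Real.mul_self_sqrt (abs_nonneg t),
      sgnR_mul_abs]
  have hSS : Cg sgnR * Cg sgnR = 1 := by
    rw [hmul]
    have h1 : (fun t => sgnR t * sgnR t) = fun _ : ℝ => (1:ℝ) := funext sgnR_mul_self
    rw [h1]
    simp only [hCgdef]
    rw [show ((fun _ : ℝ => (1:ℝ)) ∘ lam) = fun _ => (1:ℝ) from rfl, diagonal_one, mul_one, hu1]
  have hRR : Cg (fun t => Real.sqrt |t|) * Cg (fun t => Real.sqrt |t|) = Cg (fun t => |t|) := by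
    rw [hmul]
    exact congrArg Cg (funext fun t => Real.mul_self_sqrt (abs_nonneg t))
  have hM : matAbs B = Cg (fun t => |t|) := by
    have h2 : Cg (fun t => |t|) ^ 2 = Bᴴ * B := by
      rw [pow_two, hmul, hB'.eq, ← hid, hmul]
      exact congrArg Cg (funext fun t => abs_mul_abs_self t)
    exact matAbs_eq_of_sq B _ (hpsd _ (fun t => abs_nonneg t)) h2
  -- abbreviate
  set Rm := Cg (fun t => Real.sqrt |t|) with hRmdef
  set Sm := Cg sgnR with hSmdef
  have hRh : Rmᴴ = Rm := hsymm _
  have hSh : Smᴴ = Sm := hsymm _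
  have hC₁ : (Rm * A₁ * Rm).PosSemidef := by
    have h := hA₁.mul_mul_conjTranspose_same Rm
    rwa [hRh] at h
  have hC₂ : (Sm * (Rm * A₂ * Rm) * Sm).PosSemidef := by
    have h := hA₂.mul_mul_conjTranspose_same Rm
    rw [hRh] at h
    have h2 := h.mul_mul_conjTranspose_same Sm
    rwa [hSh] at h2
  have e1 : (A₁ * B * A₂ * B).trace = ((Rm * A₁ * Rm) * (Sm * (Rm * A₂ * Rm) * Sm)).trace := by
    have h3 : (Rm * A₁ * Rm) * (Sm * (Rm * A₂ * Rm) * Sm)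
        = Rm * (A₁ * (Rm * (Sm * (Rm * (A₂ * (Rm * Sm)))))) := by
      simp only [mul_assoc]
    rw [h3]
    rw [trace_mul_comm Rm (A₁ * (Rm * (Sm * (Rm * (A₂ * (Rm * Sm))))))]
    rw [← hRSR]
    congr 1
    simp only [mul_assoc]
  have e2 : (Rm * A₁ * Rm).trace = (A₁ * matAbs B).trace := by
    calc (Rm * A₁ * Rm).trace = (Rm * (Rm * A₁)).trace := trace_mul_comm _ _
      _ = ((Rm * Rm) * A₁).trace := by rw [← mul_assoc Rm Rm A₁]
      _ = (A₁ * (Rm * Rm)).trace := trace_mul_comm _ _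
      _ = (A₁ * matAbs B).trace := by rw [hRR, hM]
  have e3 : (Sm * (Rm * A₂ * Rm) * Sm).trace = (A₂ * matAbs B).trace := by
    calc (Sm * (Rm * A₂ * Rm) * Sm).trace
        = (Sm * (Sm * (Rm * A₂ * Rm))).trace := trace_mul_comm _ _
      _ = ((Sm * Sm) * (Rm * A₂ * Rm)).trace := by rw [← mul_assoc Sm Sm (Rm * A₂ * Rm)]
      _ = (Rm * A₂ * Rm).trace := by rw [hSS, one_mul]
      _ = (Rm * (Rm * A₂)).trace := trace_mul_comm _ _
      _ = ((Rm * Rm) * A₂).trace := by rw [← mul_assoc Rm Rm A₂]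
      _ = (A₂ * (Rm * Rm)).trace := trace_mul_comm _ _
      _ = (A₂ * matAbs B).trace := by rw [hRR, hM]
  calc (A₁ * B * A₂ * B).trace
      = ((Rm * A₁ * Rm) * (Sm * (Rm * A₂ * Rm) * Sm)).trace := e1
    _ ≤ (Rm * A₁ * Rm).trace * (Sm * (Rm * A₂ * Rm) * Sm).trace := psd_trace_mul_le hC₁ hC₂
    _ = (A₁ * matAbs B).trace * (A₂ * matAbs B).trace := by rw [e2, e3]
end

section
/- For m ≥ 7, if y ∼ N(0, I_m), then E[‖y‖₂² | ‖y‖₂ ≤ m] ≥ (1 − 2^{-m})·m. -/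
open MeasureTheory

open Real ProbabilityTheory NNReal Filter in
private lemma my_hpdf :
    gaussianPDFReal 0 1 = fun x => (Real.sqrt (2*π))⁻¹ * Real.exp (-(2⁻¹) * x^2) := by
  funext x
  rw [gaussianPDFReal]
  simp only [NNReal.coe_one, mul_one, sub_zero]
  congr 1
  ring_nf

open Real ProbabilityTheory NNReal Filter in
private lemma my_gauss_int (g : ℝ → ℝ) :
    ∫ x, g x ∂(gaussianReal 0 1) = ∫ x, gaussianPDFReal 0 1 x * g x := by
  rw [gaussianReal_of_var_ne_zero 0 one_ne_zero]
  rw [show gaussianPDF 0 1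
      = fun x => ((Real.toNNReal (gaussianPDFReal 0 1 x) : ℝ≥0) : ENNReal) from rfl]
  rw [integral_withDensity_eq_integral_smul ((measurable_gaussianPDFReal 0 1).real_toNNReal) g]
  congr 1
  funext x
  rw [NNReal.smul_def, Real.coe_toNNReal _ (gaussianPDFReal_nonneg 0 1 x), smul_eq_mul]

open Real ProbabilityTheory NNReal Filter in
private lemma my_gauss_integrable (g : ℝ → ℝ)
    (h : Integrable (fun x => gaussianPDFReal 0 1 x * g x) volume) :
    Integrable g (gaussianReal 0 1) := by
  rw [gaussianReal_of_var_ne_zero 0 one_ne_zero]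
  rw [show gaussianPDF 0 1
      = fun x => ((Real.toNNReal (gaussianPDFReal 0 1 x) : ℝ≥0) : ENNReal) from rfl]
  rw [integrable_withDensity_iff_integrable_smul ((measurable_gaussianPDFReal 0 1).real_toNNReal)]
  refine h.congr (Filter.Eventually.of_forall fun x => ?_)
  show _ = (gaussianPDFReal 0 1 x).toNNReal • g x
  rw [NNReal.smul_def, Real.coe_toNNReal _ (gaussianPDFReal_nonneg 0 1 x), smul_eq_mul]

open Real ProbabilityTheory NNReal Filter in
private lemma my_hint2 : Integrable (fun x : ℝ => x^2 * Real.exp (-(2⁻¹) * x^2)) := by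
  have h := integrable_rpow_mul_exp_neg_mul_sq (b := (2⁻¹:ℝ)) (by norm_num)
    (s := ((2:ℕ):ℝ)) (by norm_num)
  refine h.congr (Filter.Eventually.of_forall fun x => ?_)
  simp only [Real.rpow_natCast]

open Real ProbabilityTheory NNReal Filter in
private lemma my_hint0 : Integrable (fun x : ℝ => Real.exp (-(2⁻¹) * x^2)) :=
  integrable_exp_neg_mul_sq (by norm_num)

open Real ProbabilityTheory NNReal Filter in
private lemma my_gderiv (x : ℝ) :
    HasDerivAt (fun x : ℝ => -x * Real.exp (-(2⁻¹) * x^2))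
      ((x^2 - 1) * Real.exp (-(2⁻¹) * x^2)) x := by
  have h1 : HasDerivAt (fun x : ℝ => -(2⁻¹) * x^2) (-x) x := by
    simpa using (hasDerivAt_pow 2 x).const_mul (-(2⁻¹:ℝ))
  have h2 := h1.exp
  have h3 : HasDerivAt (fun x : ℝ => -x * Real.exp (-(2⁻¹) * x^2))
      (-1 * Real.exp (-(2⁻¹) * x^2) + -x * (Real.exp (-(2⁻¹) * x^2) * -x)) x :=
    ((hasDerivAt_id x).neg).mul h2
  convert h3 using 1
  ring

open Real ProbabilityTheory NNReal Filter in
private lemma my_gtendstoTop :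
    Tendsto (fun x : ℝ => -x * Real.exp (-(2⁻¹) * x^2)) atTop (nhds 0) := by
  have h := rpow_mul_exp_neg_mul_sq_isLittleO_exp_neg (b := (2⁻¹:ℝ)) (by norm_num) 1
  have h2 : Tendsto (fun x : ℝ => Real.exp (-(1/2) * x)) atTop (nhds 0) := by
    have h5 : Tendsto (fun x : ℝ => -(1/2) * x) atTop atBot := by
      apply Filter.Tendsto.const_mul_atTop_of_neg (by norm_num) tendsto_id
    exact Real.tendsto_exp_atBot.comp h5
  have h3 := h.tendsto_zero_of_tendsto h2
  have h4 : Tendsto (fun x : ℝ => x * Real.exp (-(2⁻¹) * x^2)) atTop (nhds 0) := by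
    refine h3.congr' ?_
    filter_upwards [eventually_gt_atTop (0:ℝ)] with x hx
    rw [Real.rpow_one]
  simpa using h4.neg

open Real ProbabilityTheory NNReal Filter in
private lemma my_gtendstoBot :
    Tendsto (fun x : ℝ => -x * Real.exp (-(2⁻¹) * x^2)) atBot (nhds 0) := by
  have h4 : Tendsto (fun x : ℝ => x * Real.exp (-(2⁻¹) * x^2)) atTop (nhds 0) := by
    have := my_gtendstoTop
    simpa using this.neg
  have := h4.comp tendsto_neg_atBot_atTop
  refine this.congr fun x => ?_
  simp [Function.comp]

open Real ProbabilityTheory NNReal Filter in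
private lemma my_moment2 : ∫ x : ℝ, x^2 * Real.exp (-(2⁻¹) * x^2) = Real.sqrt (2*π) := by
  have hg'int : Integrable (fun x : ℝ => (x^2 - 1) * Real.exp (-(2⁻¹) * x^2)) := by
    have := my_hint2.sub my_hint0
    refine this.congr (Filter.Eventually.of_forall fun x => ?_)
    simp only [Pi.sub_apply]
    ring
  have hIoi : ∫ x in Set.Ioi (0:ℝ), (x^2 - 1) * Real.exp (-(2⁻¹) * x^2) = 0 := by
    have := integral_Ioi_of_hasDerivAt_of_tendsto' (a := 0)
      (fun x _ => my_gderiv x) hg'int.integrableOn my_gtendstoTop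
    simpa using this
  have hIic : ∫ x in Set.Iic (0:ℝ), (x^2 - 1) * Real.exp (-(2⁻¹) * x^2) = 0 := by
    have := integral_Iic_of_hasDerivAt_of_tendsto' (a := 0)
      (fun x _ => my_gderiv x) hg'int.integrableOn my_gtendstoBot
    simpa using this
  have hsplit : ∫ x : ℝ, (x^2 - 1) * Real.exp (-(2⁻¹) * x^2) = 0 := by
    rw [← intervalIntegral.integral_Iic_add_Ioi (b := (0:ℝ))
      hg'int.integrableOn hg'int.integrableOn, hIoi, hIic]
    ring
  have hgauss : ∫ x : ℝ, Real.exp (-(2⁻¹) * x^2) = Real.sqrt (2*π) := by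
    rw [integral_gaussian]
    rw [show π / (2⁻¹:ℝ) = 2 * π by ring]
  have heq : ∫ x : ℝ, x^2 * Real.exp (-(2⁻¹) * x^2)
      = (∫ x : ℝ, (x^2 - 1) * Real.exp (-(2⁻¹) * x^2)) + ∫ x : ℝ, Real.exp (-(2⁻¹) * x^2) := by
    rw [← integral_add hg'int my_hint0]
    congr 1
    funext x
    ring
  rw [heq, hsplit, hgauss, zero_add]

open Real ProbabilityTheory NNReal Filter in
private lemma my_sqrt2pi_pos : (0:ℝ) < Real.sqrt (2*π) := Real.sqrt_pos.mpr (by positivity)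

open Real ProbabilityTheory NNReal Filter in
private lemma my_J0 : Integrable (fun x : ℝ => x^2) (gaussianReal 0 1) := by
  apply my_gauss_integrable
  rw [my_hpdf]
  have h := (my_hint2.const_mul ((Real.sqrt (2*π))⁻¹))
  refine h.congr (Filter.Eventually.of_forall fun x => ?_)
  ring

open Real ProbabilityTheory NNReal Filter in
private lemma my_I0 : ∫ x, x^2 ∂(gaussianReal 0 1) = 1 := by
  rw [my_gauss_int, my_hpdf]
  have h : ∀ x : ℝ, (Real.sqrt (2*π))⁻¹ * Real.exp (-(2⁻¹) * x^2) * x^2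
      = (Real.sqrt (2*π))⁻¹ * (x^2 * Real.exp (-(2⁻¹) * x^2)) := fun x => by ring
  simp only [h]
  rw [integral_const_mul, my_moment2]
  field_simp

open Real ProbabilityTheory NNReal Filter in
private lemma my_exp_eq : (fun x : ℝ => gaussianPDFReal 0 1 x * Real.exp (7/16 * x^2))
    = fun x => (Real.sqrt (2*π))⁻¹ * Real.exp (-(16⁻¹:ℝ) * x^2) := by
  rw [my_hpdf]
  funext x
  rw [mul_assoc, ← Real.exp_add]
  congr 2
  ring

open Real ProbabilityTheory NNReal Filter in
private lemma my_J1 : Integrable (fun x : ℝ => Real.exp (7/16 * x^2)) (gaussianReal 0 1) := by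
  apply my_gauss_integrable
  rw [my_exp_eq]
  exact (integrable_exp_neg_mul_sq (by norm_num)).const_mul _

open Real ProbabilityTheory NNReal Filter in
private lemma my_I1 : ∫ x, Real.exp (7/16 * x^2) ∂(gaussianReal 0 1) = Real.sqrt 8 := by
  rw [my_gauss_int, my_exp_eq, integral_const_mul, integral_gaussian]
  rw [show π / (16⁻¹:ℝ) = 8 * (2*π) by ring,
    Real.sqrt_mul (show (0:ℝ) ≤ 8 by norm_num) (2*π),
    inv_mul_eq_div, mul_div_assoc, div_self (ne_of_gt my_sqrt2pi_pos), mul_one]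

/-- The standard Gaussian measure `N(0, I_m)` on `ℝᵐ`. -/
noncomputable def stdGaussian (m : ℕ) : Measure (Fin m → ℝ) :=
  Measure.pi fun _ => ProbabilityTheory.gaussianReal 0 1

open Real ProbabilityTheory NNReal Filter in
private lemma my_pi_integral {m : ℕ} (h : Fin m → ℝ → ℝ) :
    ∫ y, ∏ i, h i (y i) ∂(stdGaussian m)
      = ∏ i, ∫ x, h i x ∂(gaussianReal 0 1) := by
  letI : MeasureSpace ℝ := ⟨gaussianReal 0 1⟩
  haveI : SigmaFinite (volume : Measure ℝ) := inferInstanceAs (SigmaFinite (gaussianReal 0 1))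
  rw [show stdGaussian m = (volume : Measure (Fin m → ℝ)) from (volume_pi).symm]
  exact MeasureTheory.integral_fintype_prod_eq_prod h

open Real ProbabilityTheory NNReal Filter in
private lemma my_pi_integrable {m : ℕ} (h : Fin m → ℝ → ℝ)
    (hi : ∀ i, Integrable (h i) (gaussianReal 0 1)) :
    Integrable (fun y => ∏ i, h i (y i)) (stdGaussian m) := by
  letI : MeasureSpace ℝ := ⟨gaussianReal 0 1⟩
  haveI : SigmaFinite (volume : Measure ℝ) := inferInstanceAs (SigmaFinite (gaussianReal 0 1))
  rw [show stdGaussian m = (volume : Measure (Fin m → ℝ)) from (volume_pi).symm]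
  exact MeasureTheory.Integrable.fintype_prod hi

open Real ProbabilityTheory NNReal Filter in
private lemma my_numeric {m : ℕ} (hm : 7 ≤ m) :
    16 * Real.exp (-(3 * (m:ℝ)^2 / 8)) * (Real.sqrt 8)^m ≤ (2⁻¹:ℝ)^m * m := by
  have hm7 : (7:ℝ) ≤ (m:ℝ) := by exact_mod_cast hm
  have hs2 : Real.sqrt 2 ^ 2 = 2 := Real.sq_sqrt (by norm_num)
  have hs2n : (0:ℝ) ≤ Real.sqrt 2 := Real.sqrt_nonneg 2
  have hs2one : (1:ℝ) ≤ Real.sqrt 2 := by nlinarith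
  have hs8 : Real.sqrt 8 ^ 2 = 8 := Real.sq_sqrt (by norm_num)
  have hs8n : (0:ℝ) ≤ Real.sqrt 8 := Real.sqrt_nonneg 8
  have hprod : Real.sqrt 8 * 2 * Real.sqrt 2 = 8 := by
    have h16 : Real.sqrt 8 * Real.sqrt 2 = 4 := by
      rw [← Real.sqrt_mul (by norm_num : (0:ℝ) ≤ 8)]
      rw [show (8:ℝ) * 2 = 4^2 by norm_num, Real.sqrt_sq (by norm_num : (0:ℝ) ≤ 4)]
    nlinarith
  have e1 : (8:ℝ)^m ≤ Real.exp (3 * (m:ℝ)^2 / 8) := by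
    rw [show 3 * (m:ℝ)^2 / 8 = (m:ℝ) * (3 * (m:ℝ) / 8) by ring, Real.exp_nat_mul]
    apply pow_le_pow_left₀ (by norm_num)
    have h8 : (8:ℝ) ≤ Real.exp (21/8) := by
      have l2 := Real.log_two_lt_d9
      have l8 : Real.log 8 = 3 * Real.log 2 := by
        rw [show (8:ℝ) = 2^3 by norm_num, Real.log_pow]
        push_cast; ring
      have hl : Real.log 8 ≤ 21/8 := by rw [l8]; linarith
      exact (Real.log_le_iff_le_exp (show (0:ℝ) < 8 by norm_num)).mp hl
    refine le_trans h8 (Real.exp_le_exp.mpr (by linarith))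
  have e3 : (16:ℝ) ≤ (m:ℝ) * (Real.sqrt 2)^m := by
    have h7 : (Real.sqrt 2)^7 ≤ (Real.sqrt 2)^m := pow_le_pow_right₀ hs2one hm
    have h87 : (8:ℝ) ≤ (Real.sqrt 2)^7 := by
      rw [show (Real.sqrt 2)^7 = ((Real.sqrt 2)^2)^3 * Real.sqrt 2 by ring, hs2]
      nlinarith
    nlinarith
  have key : 16 * ((Real.sqrt 8)^m * 2^m) ≤ (m:ℝ) * Real.exp (3 * (m:ℝ)^2 / 8) := by
    have step1 : 16 * ((Real.sqrt 8)^m * 2^m)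
        ≤ ((m:ℝ) * (Real.sqrt 2)^m) * ((Real.sqrt 8)^m * 2^m) :=
      mul_le_mul_of_nonneg_right e3 (by positivity)
    have step2 : ((m:ℝ) * (Real.sqrt 2)^m) * ((Real.sqrt 8)^m * 2^m) = (m:ℝ) * 8^m := by
      rw [show ((m:ℝ) * (Real.sqrt 2)^m) * ((Real.sqrt 8)^m * 2^m)
          = (m:ℝ) * ((Real.sqrt 8 * 2 * Real.sqrt 2)^m) by rw [mul_pow, mul_pow]; ring]
      rw [hprod]
    have step3 : (m:ℝ) * 8^m ≤ (m:ℝ) * Real.exp (3 * (m:ℝ)^2 / 8) :=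
      mul_le_mul_of_nonneg_left e1 (by positivity)
    linarith [step1, step2 ▸ step1, step3]
  have hexp : (0:ℝ) < Real.exp (3 * (m:ℝ)^2 / 8) := Real.exp_pos _
  have h2m : (0:ℝ) < (2:ℝ)^m := by positivity
  rw [Real.exp_neg]
  rw [show (2⁻¹:ℝ)^m = ((2:ℝ)^m)⁻¹ by rw [inv_pow]]
  rw [show 16 * (Real.exp (3 * (m:ℝ)^2 / 8))⁻¹ * (Real.sqrt 8)^m
      = (16 * ((Real.sqrt 8)^m * 2^m)) / (Real.exp (3 * (m:ℝ)^2 / 8) * 2^m) by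
        field_simp]
  rw [div_le_iff₀ (by positivity)]
  calc 16 * ((Real.sqrt 8)^m * 2^m) ≤ (m:ℝ) * Real.exp (3 * (m:ℝ)^2 / 8) := key
    _ = ((2:ℝ)^m)⁻¹ * (m:ℝ) * (Real.exp (3 * (m:ℝ)^2 / 8) * 2^m) := by
        field_simp

open Real ProbabilityTheory NNReal Filter in
theorem gaussian_cond_norm_sq {m : ℕ} (hm : 7 ≤ m) :
    (1 - (2⁻¹ : ℝ) ^ m) * m ≤
      ∫ y, (∑ i, (y i) ^ 2)
        ∂(ProbabilityTheory.cond (stdGaussian m) {y | Real.sqrt (∑ i, (y i) ^ 2) ≤ m}) := by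
  haveI : IsProbabilityMeasure (stdGaussian m) := by
    rw [show stdGaussian m = Measure.pi fun _ => gaussianReal 0 1 from rfl]; infer_instance
  set f : (Fin m → ℝ) → ℝ := fun y => ∑ i, (y i)^2 with hf_def
  have hfm : Measurable f := by
    apply Finset.measurable_sum
    intro i _
    exact (measurable_pi_apply i).pow_const 2
  set A : Set (Fin m → ℝ) := {y | Real.sqrt (∑ i, (y i)^2) ≤ m} with hA_def
  have hA : MeasurableSet A :=
    measurableSet_le (Real.continuous_sqrt.measurable.comp hfm) measurable_const
  -- coordinate squares are integrable with integral 1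
  have hIntSq : ∀ i, Integrable (fun y : Fin m → ℝ => (y i)^2) (stdGaussian m) := by
    intro i
    have h := my_pi_integrable (fun j x => if j = i then x^2 else 1) (fun j => by
      by_cases hj : j = i
      · simpa [hj] using my_J0
      · simpa [hj] using (integrable_const (1:ℝ) (μ := gaussianReal 0 1)))
    refine h.congr (Filter.Eventually.of_forall fun y => ?_)
    simp
  have hEi : ∀ i, ∫ y, (y i)^2 ∂(stdGaussian m) = 1 := by
    intro i
    have hp : ∫ y : Fin m → ℝ, (∏ j, if j = i then (y j)^2 else 1) ∂(stdGaussian m)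
        = ∏ j : Fin m, ∫ x : ℝ, (if j = i then x^2 else 1) ∂(gaussianReal 0 1) :=
      my_pi_integral (fun j x => if j = i then x^2 else 1)
    have heq : ∫ y : Fin m → ℝ, (y i)^2 ∂(stdGaussian m)
        = ∫ y : Fin m → ℝ, (∏ j, if j = i then (y j)^2 else 1) ∂(stdGaussian m) := by
      congr 1
      funext y
      simp
    rw [heq, hp]
    apply Finset.prod_eq_one
    intro j _
    by_cases hj : j = i
    · simpa [hj] using my_I0
    · simp [hj]
  have hfInt : Integrable f (stdGaussian m) := integrable_finset_sum _ (fun i _ => hIntSq i)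
  have hEf : ∫ y, f y ∂(stdGaussian m) = (m:ℝ) := by
    rw [hf_def, integral_finset_sum _ (fun i _ => hIntSq i)]
    simp [hEi]
  -- the exponential product
  have hΦInt : Integrable (fun y : Fin m → ℝ => ∏ i, Real.exp (7/16 * (y i)^2)) (stdGaussian m) := by
    exact my_pi_integrable _ (fun i => my_J1)
  have hΦE : ∫ y, ∏ i, Real.exp (7/16 * (y i)^2) ∂(stdGaussian m) = (Real.sqrt 8)^m := by
    have hp : ∫ y : Fin m → ℝ, ∏ i, Real.exp (7/16 * (y i)^2) ∂(stdGaussian m)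
        = ∏ _i : Fin m, ∫ x : ℝ, Real.exp (7/16 * x^2) ∂(gaussianReal 0 1) :=
      my_pi_integral (fun _ x => Real.exp (7/16 * x^2))
    rw [hp]
    simp [my_I1]
  set C : ℝ := 16 * Real.exp (-(3 * (m:ℝ)^2 / 8)) with hC
  have hC_pos : 0 < C := by positivity
  -- pointwise bound on Aᶜ
  have hpoint : ∀ y ∈ Aᶜ, f y ≤ C * ∏ i, Real.exp (7/16 * (y i)^2) := by
    intro y hy
    have hprod_exp : ∏ i, Real.exp (7/16 * (y i)^2) = Real.exp (7/16 * f y) := by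
      rw [hf_def, Finset.mul_sum, Real.exp_sum]
    rw [hprod_exp]
    have hfy : 0 ≤ f y := Finset.sum_nonneg fun i _ => sq_nonneg _
    have hnot : ¬ (Real.sqrt (f y) ≤ (m:ℝ)) := hy
    have hlt : (m:ℝ) < Real.sqrt (f y) := not_le.mp hnot
    have hgt : (m:ℝ)^2 < f y := by
      nlinarith [Real.sq_sqrt hfy, Real.sqrt_nonneg (f y), Nat.cast_nonneg (α := ℝ) m]
    have h1 := Real.add_one_le_exp (f y / 16)
    have h2 : (1:ℝ) ≤ Real.exp (3 * (f y - (m:ℝ)^2) / 8) := Real.one_le_exp (by nlinarith)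
    have h3 : f y ≤ 16 * Real.exp (f y / 16) := by linarith
    calc f y ≤ (16 * Real.exp (f y / 16)) * Real.exp (3 * (f y - (m:ℝ)^2) / 8) := by
          nlinarith [Real.exp_pos (f y / 16)]
      _ = C * Real.exp (7/16 * f y) := by
          rw [hC, mul_assoc, ← Real.exp_add, mul_assoc, ← Real.exp_add]
          congr 2
          ring
  -- tail bound
  have hTail : ∫ y in Aᶜ, f y ∂(stdGaussian m) ≤ (2⁻¹:ℝ)^m * m := by
    have step1 : ∫ y in Aᶜ, f y ∂(stdGaussian m)
        ≤ ∫ y in Aᶜ, C * ∏ i, Real.exp (7/16 * (y i)^2) ∂(stdGaussian m) :=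
      setIntegral_mono_on hfInt.integrableOn (hΦInt.const_mul C).integrableOn hA.compl hpoint
    have step2 : ∫ y in Aᶜ, C * ∏ i, Real.exp (7/16 * (y i)^2) ∂(stdGaussian m)
        ≤ ∫ y, C * ∏ i, Real.exp (7/16 * (y i)^2) ∂(stdGaussian m) :=
      setIntegral_le_integral (hΦInt.const_mul C)
        (Filter.Eventually.of_forall fun y => by positivity)
    have step3 : ∫ y, C * ∏ i, Real.exp (7/16 * (y i)^2) ∂(stdGaussian m) = C * (Real.sqrt 8)^m := by
      rw [integral_const_mul, hΦE]
    have step4 : C * (Real.sqrt 8)^m ≤ (2⁻¹:ℝ)^m * m := my_numeric hm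
    linarith [step1, step2, step3 ▸ step2, step4]
  -- split the integral
  have hsplit : (∫ y in A, f y ∂(stdGaussian m)) + ∫ y in Aᶜ, f y ∂(stdGaussian m) = (m:ℝ) := by
    rw [integral_add_compl hA hfInt, hEf]
  have htarget_pos : 0 < (1 - (2⁻¹:ℝ)^m) * m := by
    have hp : (2⁻¹:ℝ)^m < 1 := pow_lt_one₀ (by norm_num) (by norm_num) (by omega)
    have hm0 : (0:ℝ) < m := by
      have : (7:ℝ) ≤ (m:ℝ) := by exact_mod_cast hm
      linarith
    nlinarith
  have hS_lb : (1 - (2⁻¹:ℝ)^m) * m ≤ ∫ y in A, f y ∂(stdGaussian m) := by nlinarith [hTail, hsplit]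
  have hS_pos : 0 < ∫ y in A, f y ∂(stdGaussian m) := lt_of_lt_of_le htarget_pos hS_lb
  have hμA0 : (stdGaussian m) A ≠ 0 := by
    intro h0
    rw [show (∫ y in A, f y ∂(stdGaussian m)) = 0 by
      rw [Measure.restrict_eq_zero.mpr h0, integral_zero_measure]] at hS_pos
    exact lt_irrefl 0 hS_pos
  have hμA_top : (stdGaussian m) A ≠ ⊤ := measure_ne_top _ _
  have hr_pos : 0 < ((stdGaussian m) A).toReal := ENNReal.toReal_pos hμA0 hμA_top
  have hr_le : ((stdGaussian m) A).toReal ≤ 1 := by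
    have h1 := prob_le_one (μ := stdGaussian m) (s := A)
    calc ((stdGaussian m) A).toReal ≤ (1 : ENNReal).toReal := ENNReal.toReal_mono (by simp) h1
      _ = 1 := by simp
  -- finish
  show (1 - (2⁻¹:ℝ)^m) * m ≤ ∫ y, f y ∂(((stdGaussian m) A)⁻¹ • (stdGaussian m).restrict A)
  rw [integral_smul_measure, ENNReal.toReal_inv, smul_eq_mul]
  have hinv : (1:ℝ) ≤ (((stdGaussian m) A).toReal)⁻¹ := by
    rw [← one_div]
    exact one_le_one_div hr_pos hr_le
  have hfinal : (1:ℝ) * (∫ y in A, f y ∂(stdGaussian m)) ≤ (((stdGaussian m) A).toReal)⁻¹ * ∫ y in A, f y ∂(stdGaussian m) :=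
    mul_le_mul_of_nonneg_right hinv (le_of_lt hS_pos)
  linarith
end

section
/- Let A be a symmetric positive definite n×n matrix and A₁,…,A_m symmetric matrices with Σ_{i∈I} |Aᵢ| ⪯ I_n for a subset I ⊆ [m] such that tr[A⁻¹|Aᵢ|] ≤ (2/(α²m))·tr[A⁻¹] for all i ∈ I. Then Σ_{i∈I} tr[A⁻¹ Aᵢ A⁻¹ Aᵢ A⁻¹] ≤ (2/(α²m))·tr[A⁻¹]·tr[A⁻²]. -/
open Matrix

section helpers
variable {n : ℕ}

lemma psd_diag_nonneg {X : Matrix (Fin n) (Fin n) ℝ} (hX : X.PosSemidef) (k : Fin n) :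
    0 ≤ X k k := by
  have := hX.dotProduct_mulVec_nonneg (Pi.single k 1)
  simpa [dotProduct, Matrix.mulVec, Finset.sum_ite_eq, Pi.single_apply] using this

lemma psd_trace_nonneg_s12 {X : Matrix (Fin n) (Fin n) ℝ} (hX : X.PosSemidef) :
    0 ≤ X.trace := by
  rw [Matrix.trace]
  exact Finset.sum_nonneg fun k _ => psd_diag_nonneg hX k

open scoped MatrixOrder in
lemma psd_trace_mul_nonneg_s12 {X Y : Matrix (Fin n) (Fin n) ℝ} (hX : X.PosSemidef)
    (hY : Y.PosSemidef) : 0 ≤ (X * Y).trace := by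
  have hX0 : 0 ≤ X := nonneg_iff_posSemidef.mpr hX
  have h2 : X * Y = CFC.sqrt X * (CFC.sqrt X * Y) := by
    rw [← mul_assoc, CFC.sqrt_mul_sqrt_self X hX0]
  rw [h2, Matrix.trace_mul_comm]
  have hh : CFC.sqrt X * Y * (CFC.sqrt X)ᴴ = CFC.sqrt X * Y * CFC.sqrt X := by
    rw [(nonneg_iff_posSemidef.mp (CFC.sqrt_nonneg X)).1]
  exact psd_trace_nonneg_s12 (hh ▸ hY.mul_mul_conjTranspose_same (CFC.sqrt X))

lemma psd_entry_sq_le {P : Matrix (Fin n) (Fin n) ℝ} (hP : P.PosSemidef) (k l : Fin n) :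
    (P k l) ^ 2 ≤ P k k * P l l := by
  by_cases hkl : k = l
  · subst hkl; rw [sq]
  have hsym : P l k = P k l := by
    have h := congrFun (congrFun hP.1 l) k
    simpa [Matrix.conjTranspose_apply] using h.symm
  have key : ∀ t : ℝ, 0 ≤ P k k * (t * t) + (2 * P k l) * t + P l l := by
    intro t
    set v : Fin n → ℝ := fun j => (if j = k then t else 0) + (if j = l then 1 else 0) with hv
    have h := hP.dotProduct_mulVec_nonneg v
    have expand : star v ⬝ᵥ P *ᵥ v
        = P k k * (t * t) + (2 * P k l) * t + P l l := by
      simp only [star_trivial, dotProduct, Matrix.mulVec, hv]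
      simp [mul_add, add_mul, ite_mul, mul_ite, mul_zero, zero_mul, mul_one,
        Finset.sum_add_distrib, Finset.sum_ite_eq, Finset.sum_ite_eq', hkl, Ne.symm hkl, hsym]
      ring
    rw [expand] at h
    simpa using h
  have hd := discrim_le_zero key
  rw [discrim] at hd
  nlinarith [hd]

end helpers

section core
variable {n : ℕ}

lemma matAbs_psd (B : Matrix (Fin n) (Fin n) ℝ) : (matAbs B).PosSemidef := by
  have h1 : (diagonal ((↑) ∘ (√·) ∘ (Matrix.posSemidef_conjTranspose_mul_self B).1.eigenvalues) :
      Matrix (Fin n) (Fin n) ℝ).PosSemidef :=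
    Matrix.PosSemidef.diagonal fun k => by simp [Real.sqrt_nonneg]
  exact h1.mul_mul_conjTranspose_same _

open scoped MatrixOrder in
lemma matAbs_spectral {B : Matrix (Fin n) (Fin n) ℝ} (hB : B.IsHermitian) :
    matAbs B = (hB.eigenvectorUnitary : Matrix (Fin n) (Fin n) ℝ) *
      diagonal (fun k => |hB.eigenvalues k|) *
      star (hB.eigenvectorUnitary : Matrix (Fin n) (Fin n) ℝ) := by
  set U : Matrix (Fin n) (Fin n) ℝ := (hB.eigenvectorUnitary : Matrix (Fin n) (Fin n) ℝ) with hU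
  set d := hB.eigenvalues with hd
  have hUU : star U * U = 1 := Matrix.mem_unitaryGroup_iff'.mp hB.eigenvectorUnitary.2
  have hspec : B = U * diagonal d * star U := by
    simpa using hB.spectral_theorem
  set Mabs : Matrix (Fin n) (Fin n) ℝ := U * diagonal (fun k => |d k|) * star U with hM
  have hMabs : Mabs.PosSemidef := by
    have h1 : (diagonal (fun k => |d k|) : Matrix (Fin n) (Fin n) ℝ).PosSemidef :=
      Matrix.PosSemidef.diagonal fun k => abs_nonneg _
    exact h1.mul_mul_conjTranspose_same U
  have key : ∀ X Y : Matrix (Fin n) (Fin n) ℝ,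
      (U * X * star U) * (U * Y * star U) = U * (X * Y) * star U := by
    intro X Y
    have h1 : (U * X * star U) * (U * Y * star U)
        = U * (X * ((star U * U) * (Y * star U))) := by simp only [mul_assoc]
    rw [h1, hUU, one_mul]
    simp only [mul_assoc]
  have hsq : Mabs ^ 2 = Bᴴ * B := by
    rw [hB.eq, pow_two, hM, key, hspec, key, diagonal_mul_diagonal, diagonal_mul_diagonal]
    have habs : (fun i => |d i| * |d i|) = fun i => d i * d i :=
      funext fun i => abs_mul_abs_self _
    rw [habs]
  have hH := (Matrix.posSemidef_conjTranspose_mul_self B).1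
  have e1 : matAbs B = cfc Real.sqrt (Bᴴ * B) := by rw [hH.cfc_eq]; rfl
  rw [e1, ← cfcₙ_eq_cfc (hf := Real.continuous_sqrt.continuousOn) (hf0 := Real.sqrt_zero),
    ← CFC.sqrt_eq_real_sqrt (Bᴴ * B)
    (nonneg_iff_posSemidef.mpr (posSemidef_conjTranspose_mul_self B))]
  exact CFC.sqrt_unique (by rw [← pow_two]; exact hsq) (nonneg_iff_posSemidef.mpr hMabs)

end core

section main
variable {n : ℕ}

lemma trace_quad_le {P Q B : Matrix (Fin n) (Fin n) ℝ} (hP : P.PosSemidef) (hQ : Q.PosSemidef)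
    (hB : B.IsHermitian) :
    (P * B * Q * B).trace ≤ (P * matAbs B).trace * (Q * matAbs B).trace := by
  set U : Matrix (Fin n) (Fin n) ℝ := (hB.eigenvectorUnitary : Matrix (Fin n) (Fin n) ℝ) with hU
  set d := hB.eigenvalues with hd
  have hUU : star U * U = 1 := Matrix.mem_unitaryGroup_iff'.mp hB.eigenvectorUnitary.2
  have hspec : B = U * diagonal d * star U := by simpa using hB.spectral_theorem
  set P' : Matrix (Fin n) (Fin n) ℝ := star U * P * U with hP'def
  set Q' : Matrix (Fin n) (Fin n) ℝ := star U * Q * U with hQ'def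
  have hP' : P'.PosSemidef := by
    exact hP.conjTranspose_mul_mul_same U
  have hQ' : Q'.PosSemidef := by
    exact hQ.conjTranspose_mul_mul_same U
  -- trace of R * (U * diagonal v * star U)
  have key1 : ∀ (R : Matrix (Fin n) (Fin n) ℝ) (v : Fin n → ℝ),
      (R * (U * diagonal v * star U)).trace = ∑ k, (star U * R * U) k k * v k := by
    intro R v
    have h1 : R * (U * diagonal v * star U) = (R * U * diagonal v) * star U := by
      simp only [mul_assoc]
    rw [h1, Matrix.trace_mul_comm]
    have h2 : star U * (R * U * diagonal v) = (star U * R * U) * diagonal v := by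
      simp only [mul_assoc]
    rw [h2]
    simp [Matrix.trace, Matrix.diag, Matrix.mul_diagonal]
  -- diag entries nonneg
  have hPd : ∀ k, 0 ≤ P' k k := fun k => psd_diag_nonneg hP' k
  have hQd : ∀ k, 0 ≤ Q' k k := fun k => psd_diag_nonneg hQ' k
  -- symmetric entries
  have hPsym : ∀ k l, P' l k = P' k l := by
    intro k l
    have h := congrFun (congrFun hP'.1 l) k
    simpa [Matrix.conjTranspose_apply] using h.symm
  have hQsym : ∀ k l, Q' l k = Q' k l := by
    intro k l
    have h := congrFun (congrFun hQ'.1 l) k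
    simpa [Matrix.conjTranspose_apply] using h.symm
  -- LHS as double sum
  have hLHS : (P * B * Q * B).trace
      = ∑ k, ∑ l, (P' k l * d l) * (Q' l k * d k) := by
    rw [hspec]
    have h1 : P * (U * diagonal d * star U) * Q * (U * diagonal d * star U)
        = (P * U * diagonal d) * (star U * Q * U) * (diagonal d * star U) := by
      simp only [mul_assoc]
    rw [h1, Matrix.trace_mul_comm]
    have h2 : diagonal d * star U * (P * U * diagonal d * (star U * Q * U))
        = (diagonal d * (star U * P * U) * diagonal d * (star U * Q * U)) := by
      simp only [mul_assoc]
    rw [h2]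
    have h3 : diagonal d * P' * diagonal d * Q' = (diagonal d * P') * (diagonal d * Q') := by
      simp only [mul_assoc]
    rw [h3]
    simp only [Matrix.trace, Matrix.diag, Matrix.mul_apply, Matrix.diagonal_mul]
    rw [Finset.sum_comm]
    apply Finset.sum_congr rfl; intro k _
    apply Finset.sum_congr rfl; intro l _
    simp only [Matrix.diagonal_apply, ite_mul, zero_mul, Finset.sum_ite_eq, Finset.mem_univ,
      if_true, hPsym, hQsym]
    ring
  -- the pointwise bound
  set f : Fin n → ℝ := fun k => |d k| * Real.sqrt (P' k k * Q' k k) with hf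
  have hbound : ∀ k l, (P' k l * d l) * (Q' l k * d k) ≤ f k * f l := by
    intro k l
    have habsP : |P' k l| ≤ Real.sqrt (P' k k * P' l l) := by
      rw [← Real.sqrt_sq_eq_abs]
      exact Real.sqrt_le_sqrt (psd_entry_sq_le hP' k l)
    have habsQ : |Q' k l| ≤ Real.sqrt (Q' k k * Q' l l) := by
      rw [← Real.sqrt_sq_eq_abs]
      exact Real.sqrt_le_sqrt (psd_entry_sq_le hQ' k l)
    have step1 : (P' k l * d l) * (Q' l k * d k)
        ≤ (|P' k l| * |Q' k l|) * (|d l| * |d k|) := by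
      calc (P' k l * d l) * (Q' l k * d k) ≤ |(P' k l * d l) * (Q' l k * d k)| := le_abs_self _
        _ = (|P' k l| * |Q' k l|) * (|d l| * |d k|) := by
            rw [hQsym k l, abs_mul, abs_mul, abs_mul]; ring
    have step2 : (|P' k l| * |Q' k l|) * (|d l| * |d k|)
        ≤ (Real.sqrt (P' k k * P' l l) * Real.sqrt (Q' k k * Q' l l)) * (|d l| * |d k|) := by
      apply mul_le_mul_of_nonneg_right _ (mul_nonneg (abs_nonneg _) (abs_nonneg _))
      exact mul_le_mul habsP habsQ (abs_nonneg _) (Real.sqrt_nonneg _)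
    have step3 : Real.sqrt (P' k k * P' l l) * Real.sqrt (Q' k k * Q' l l)
        = Real.sqrt (P' k k * Q' k k) * Real.sqrt (P' l l * Q' l l) := by
      rw [← Real.sqrt_mul (mul_nonneg (hPd k) (hPd l)),
        ← Real.sqrt_mul (mul_nonneg (hPd k) (hQd k))]
      congr 1; ring
    calc (P' k l * d l) * (Q' l k * d k)
        ≤ (|P' k l| * |Q' k l|) * (|d l| * |d k|) := step1
      _ ≤ (Real.sqrt (P' k k * P' l l) * Real.sqrt (Q' k k * Q' l l)) * (|d l| * |d k|) := step2
      _ = f k * f l := by rw [step3, hf]; ring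
  -- Cauchy-Schwarz
  have hCS : (∑ k, f k) ^ 2 ≤ (∑ k, P' k k * |d k|) * (∑ k, Q' k k * |d k|) := by
    have hfk : ∀ k, f k = Real.sqrt (|d k| * P' k k) * Real.sqrt (|d k| * Q' k k) := by
      intro k
      rw [hf, ← Real.sqrt_mul (mul_nonneg (abs_nonneg _) (hPd k))]
      rw [show |d k| * P' k k * (|d k| * Q' k k) = (|d k| * |d k|) * (P' k k * Q' k k) by ring,
        Real.sqrt_mul (mul_nonneg (abs_nonneg _) (abs_nonneg _)),
        Real.sqrt_mul_self (abs_nonneg _)]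
    calc (∑ k, f k) ^ 2
        = (∑ k, Real.sqrt (|d k| * P' k k) * Real.sqrt (|d k| * Q' k k)) ^ 2 := by
          congr 1; exact Finset.sum_congr rfl fun k _ => hfk k
      _ ≤ (∑ k, Real.sqrt (|d k| * P' k k) ^ 2) * (∑ k, Real.sqrt (|d k| * Q' k k) ^ 2) :=
          Finset.sum_mul_sq_le_sq_mul_sq _ _ _
      _ = (∑ k, P' k k * |d k|) * (∑ k, Q' k k * |d k|) := by
          congr 1 <;> refine Finset.sum_congr rfl fun k _ => ?_
          · rw [Real.sq_sqrt (mul_nonneg (abs_nonneg _) (hPd k))]; ring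
          · rw [Real.sq_sqrt (mul_nonneg (abs_nonneg _) (hQd k))]; ring
  -- assemble
  have hMA : matAbs B = U * diagonal (fun k => |d k|) * star U := matAbs_spectral hB
  rw [hLHS, hMA, key1 P, key1 Q]
  calc ∑ k, ∑ l, (P' k l * d l) * (Q' l k * d k)
      ≤ ∑ k, ∑ l, f k * f l := by
        apply Finset.sum_le_sum; intro k _
        exact Finset.sum_le_sum fun l _ => hbound k l
    _ = (∑ k, f k) ^ 2 := by rw [sq, Finset.sum_mul_sum]
    _ ≤ (∑ k, P' k k * |d k|) * (∑ k, Q' k k * |d k|) := hCS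

end main

theorem sum_trace_quadratic_bound {n m : ℕ} (A : Matrix (Fin n) (Fin n) ℝ) (hA : A.PosDef)
    (B : Fin m → Matrix (Fin n) (Fin n) ℝ) (hsymm : ∀ i, (B i).IsSymm)
    (α : ℝ) (hα : α ∈ Set.Ioo (0 : ℝ) 1) (I : Finset (Fin m))
    (hsum : (1 - ∑ i ∈ I, matAbs (B i)).PosSemidef)
    (htr : ∀ i ∈ I, (A⁻¹ * matAbs (B i)).trace ≤ 2 / (α ^ 2 * m) * (A⁻¹).trace) :
    ∑ i ∈ I, (A⁻¹ * B i * A⁻¹ * B i * A⁻¹).trace ≤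
      2 / (α ^ 2 * m) * (A⁻¹).trace * (A⁻¹ * A⁻¹).trace := by
  set c : ℝ := 2 / (α ^ 2 * m) with hc_def
  have hc : 0 ≤ c := div_nonneg (by norm_num) (by positivity)
  have hQ : (A⁻¹).PosSemidef := hA.inv.posSemidef
  have hP : (A⁻¹ * A⁻¹).PosSemidef := by
    have := hQ.pow 2
    simpa [pow_two] using this
  have hT1 : 0 ≤ (A⁻¹).trace := psd_trace_nonneg_s12 hQ
  have herm : ∀ i, (B i).IsHermitian := fun i => by
    rw [Matrix.IsHermitian, Matrix.conjTranspose_eq_transpose_of_trivial]; exact hsymm i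
  have hterm : ∀ i ∈ I, (A⁻¹ * B i * A⁻¹ * B i * A⁻¹).trace
      ≤ ((A⁻¹ * A⁻¹) * matAbs (B i)).trace * (c * (A⁻¹).trace) := by
    intro i hi
    have h1 : (A⁻¹ * B i * A⁻¹ * B i * A⁻¹).trace
        = ((A⁻¹ * A⁻¹) * B i * A⁻¹ * B i).trace := by
      rw [Matrix.trace_mul_comm]
      simp only [← mul_assoc]
    rw [h1]
    calc ((A⁻¹ * A⁻¹) * B i * A⁻¹ * B i).trace
        ≤ ((A⁻¹ * A⁻¹) * matAbs (B i)).trace * (A⁻¹ * matAbs (B i)).trace :=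
          trace_quad_le hP hQ (herm i)
      _ ≤ ((A⁻¹ * A⁻¹) * matAbs (B i)).trace * (c * (A⁻¹).trace) :=
          mul_le_mul_of_nonneg_left (htr i hi)
            (psd_trace_mul_nonneg_s12 hP (matAbs_psd _))
  have hS : ∑ i ∈ I, ((A⁻¹ * A⁻¹) * matAbs (B i)).trace ≤ (A⁻¹ * A⁻¹).trace := by
    have hsum_eq : ∑ i ∈ I, ((A⁻¹ * A⁻¹) * matAbs (B i)).trace
        = ((A⁻¹ * A⁻¹) * ∑ i ∈ I, matAbs (B i)).trace := by
      rw [Finset.mul_sum, Matrix.trace_sum]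
    have h := psd_trace_mul_nonneg_s12 hP hsum
    rw [mul_sub, mul_one, Matrix.trace_sub] at h
    linarith [hsum_eq]
  calc ∑ i ∈ I, (A⁻¹ * B i * A⁻¹ * B i * A⁻¹).trace
      ≤ ∑ i ∈ I, ((A⁻¹ * A⁻¹) * matAbs (B i)).trace * (c * (A⁻¹).trace) :=
        Finset.sum_le_sum hterm
    _ = (∑ i ∈ I, ((A⁻¹ * A⁻¹) * matAbs (B i)).trace) * (c * (A⁻¹).trace) := by
        rw [← Finset.sum_mul]
    _ ≤ (A⁻¹ * A⁻¹).trace * (c * (A⁻¹).trace) :=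
        mul_le_mul_of_nonneg_right hS (mul_nonneg hc hT1)
    _ = c * (A⁻¹).trace * (A⁻¹ * A⁻¹).trace := by ring
end
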